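/- arXiv:2604.07796 — 2 statements merged into one kernel-verified Lean document; each statement's English description precedes it below -/
import Mathlib

section
/- Let X have mean μ with |μ| ≤ 4σ and E[|X-μ|^k] ≤ σ^k for some k > 1. Then for every t > 8σ, |E[X · 1{|X| > t}]| ≤ σ^k/(t - |μ|)^{k-1} + |μ| · σ^k/(t - |μ|)^k. -/
open MeasureTheory

/-- Bound on the tail contribution to the mean. -/
theorem stmt4 {Ω : Type*} [MeasurableSpace Ω] (μP : Measure Ω) [IsProbabilityMeasure μP]
    (X : Ω → ℝ) (hX : Measurable X) (μ σ k t : ℝ) (hk : 1 < k) (hσ : 0 < σ)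
    (hXint : Integrable X μP) (hμ : μ = ∫ ω, X ω ∂μP) (hμ4 : |μ| ≤ 4 * σ)
    (hint : Integrable (fun ω => |X ω - μ| ^ k) μP)
    (hmom : ∫ ω, |X ω - μ| ^ k ∂μP ≤ σ ^ k)
    (ht : 8 * σ < t) :
    |∫ ω, (if t < |X ω| then X ω else 0) ∂μP| ≤
      σ ^ k / (t - |μ|) ^ (k - 1) + |μ| * (σ ^ k / (t - |μ|) ^ k) := by
  set c := t - |μ| with hc_def
  have hμpos : 0 ≤ |μ| := abs_nonneg μ
  have hc : 0 < c := by
    have : |μ| < t := lt_of_le_of_lt hμ4 (by linarith)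
    simp only [hc_def]; linarith
  have hk0 : 0 ≤ k := by linarith
  have hk1 : 0 ≤ k - 1 := by linarith
  have hfmeas : Measurable (fun ω => if t < |X ω| then X ω else 0) :=
    Measurable.ite (measurableSet_lt measurable_const hX.abs) hX measurable_const
  have hfint : Integrable (fun ω => if t < |X ω| then X ω else 0) μP := by
    refine hXint.abs.mono' hfmeas.aestronglyMeasurable (Filter.Eventually.of_forall fun ω => ?_)
    simp only [Real.norm_eq_abs]
    split_ifs with h
    · exact le_refl _
    · simpa using abs_nonneg (X ω)
  have hpt : ∀ ω, |(if t < |X ω| then X ω else 0)| ≤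
      |X ω - μ| ^ k / c ^ (k - 1) + |μ| * (|X ω - μ| ^ k / c ^ k) := by
    intro ω
    by_cases h : t < |X ω|
    · have habs : |X ω| - |μ| ≤ |X ω - μ| := abs_sub_abs_le_abs_sub (X ω) μ
      have hd : c ≤ |X ω - μ| := by simp only [hc_def]; linarith
      have hdpos : 0 < |X ω - μ| := lt_of_lt_of_le hc hd
      have hck1 : 0 < c ^ (k - 1) := Real.rpow_pos_of_pos hc _
      have hck : 0 < c ^ k := Real.rpow_pos_of_pos hc _
      have hsplit : |X ω - μ| ^ k = |X ω - μ| * |X ω - μ| ^ (k - 1) := by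
        rw [show k = 1 + (k - 1) by ring, Real.rpow_add hdpos, Real.rpow_one]
        ring_nf
      have h1 : |X ω - μ| ≤ |X ω - μ| ^ k / c ^ (k - 1) := by
        rw [le_div_iff₀ hck1, hsplit]
        have : c ^ (k - 1) ≤ |X ω - μ| ^ (k - 1) := Real.rpow_le_rpow hc.le hd hk1
        nlinarith
      have h2 : |μ| ≤ |μ| * (|X ω - μ| ^ k / c ^ k) := by
        have hle : c ^ k ≤ |X ω - μ| ^ k := Real.rpow_le_rpow hc.le hd hk0
        have h1le : (1 : ℝ) ≤ |X ω - μ| ^ k / c ^ k := (one_le_div hck).mpr hle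
        nlinarith
      rw [if_pos h]
      calc |X ω| ≤ |X ω - μ| + |μ| := by linarith
        _ ≤ |X ω - μ| ^ k / c ^ (k - 1) + |μ| * (|X ω - μ| ^ k / c ^ k) := by linarith
    · rw [if_neg h]
      simp only [abs_zero]
      have h0 : 0 ≤ |X ω - μ| ^ k := Real.rpow_nonneg (abs_nonneg _) k
      positivity
  have hint2 : Integrable (fun ω => |X ω - μ| ^ k / c ^ (k - 1)
      + |μ| * (|X ω - μ| ^ k / c ^ k)) μP :=
    (hint.div_const _).add ((hint.div_const _).const_mul _)
  calc |∫ ω, (if t < |X ω| then X ω else 0) ∂μP|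
      ≤ ∫ ω, |(if t < |X ω| then X ω else 0)| ∂μP := by
        simpa [Real.norm_eq_abs] using
          norm_integral_le_integral_norm (fun ω => if t < |X ω| then X ω else 0) (μ := μP)
    _ ≤ ∫ ω, (|X ω - μ| ^ k / c ^ (k - 1) + |μ| * (|X ω - μ| ^ k / c ^ k)) ∂μP :=
        integral_mono hfint.abs hint2 hpt
    _ = (∫ ω, |X ω - μ| ^ k ∂μP) / c ^ (k - 1)
        + |μ| * ((∫ ω, |X ω - μ| ^ k ∂μP) / c ^ k) := by
        rw [integral_add (hint.div_const _) ((hint.div_const _).const_mul _),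
          integral_div, integral_const_mul, integral_div]
    _ ≤ σ ^ k / c ^ (k - 1) + |μ| * (σ ^ k / c ^ k) := by
        have hck1 : 0 < c ^ (k - 1) := Real.rpow_pos_of_pos hc _
        have hck : 0 < c ^ k := Real.rpow_pos_of_pos hc _
        gcongr
end

section
/- Let a < b be reals, X a real random variable independent of T ~ Uniform(a, b). Define p_a = Pr(a ≤ X ≤ T) and p_b = Pr(T < X ≤ b). Then a·p_a + b·p_b = E[X · 1{a ≤ X ≤ b}]. -/
open MeasureTheory

/-- Unbiasedness identity of the randomized-threshold estimator:
    a·Pr(a ≤ X ≤ T) + b·Pr(T < X ≤ b) = E[X · 1{a ≤ X ≤ b}] when T ~ Unif(a,b) ⟂ X. -/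
theorem stmt6 {Ω : Type*} [MeasurableSpace Ω] (μP : Measure Ω) [IsProbabilityMeasure μP]
    (a b : ℝ) (hab : a < b) (X T : Ω → ℝ) (hX : Measurable X) (hT : Measurable T)
    (hunif : MeasureTheory.pdf.IsUniform T (Set.Ioo a b) μP volume)
    (hindep : ProbabilityTheory.IndepFun X T μP)
    (hXint : Integrable X μP) :
    a * (μP {ω | a ≤ X ω ∧ X ω ≤ T ω}).toReal
      + b * (μP {ω | T ω < X ω ∧ X ω ≤ b}).toReal
      = ∫ ω, (if a ≤ X ω ∧ X ω ≤ b then X ω else 0) ∂μP := by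
  have hba : (0:ℝ) < b - a := by linarith
  set ν : Measure ℝ := μP.map X with hν
  set τ : Measure ℝ := μP.map T with hτdef
  haveI : IsProbabilityMeasure ν := Measure.isProbabilityMeasure_map hX.aemeasurable
  haveI : IsProbabilityMeasure τ := Measure.isProbabilityMeasure_map hT.aemeasurable
  have hIoo : volume (Set.Ioo a b) = ENNReal.ofReal (b - a) := Real.volume_Ioo
  -- formula for τ
  have hτA : ∀ A : Set ℝ, MeasurableSet A →
      τ A = (ENNReal.ofReal (b - a))⁻¹ * volume (Set.Ioo a b ∩ A) := by
    intro A hA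
    have : τ = ProbabilityTheory.cond volume (Set.Ioo a b) := hunif
    rw [this, ProbabilityTheory.cond_apply' hA, hIoo]
  -- joint law is the product
  have hjoint : μP.map (fun ω => (X ω, T ω)) = ν.prod τ :=
    (ProbabilityTheory.indepFun_iff_map_prod_eq_prod_map_map hX.aemeasurable
      hT.aemeasurable).mp hindep
  set g1 : ℝ → ℝ := Set.indicator (Set.Icc a b) (fun x => (b - x) / (b - a)) with hg1def
  set g2 : ℝ → ℝ := Set.indicator (Set.Icc a b) (fun x => (x - a) / (b - a)) with hg2def
  -- first probability
  have key1 : μP {ω | a ≤ X ω ∧ X ω ≤ T ω} = ∫⁻ x, ENNReal.ofReal (g1 x) ∂ν := by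
    have hS1 : MeasurableSet {p : ℝ × ℝ | a ≤ p.1 ∧ p.1 ≤ p.2} :=
      (measurableSet_le measurable_const measurable_fst).inter
        (measurableSet_le measurable_fst measurable_snd)
    have h1 : μP {ω | a ≤ X ω ∧ X ω ≤ T ω}
        = (ν.prod τ) {p : ℝ × ℝ | a ≤ p.1 ∧ p.1 ≤ p.2} := by
      rw [← hjoint, Measure.map_apply (hX.prodMk hT) hS1]
      rfl
    rw [h1, Measure.prod_apply hS1]
    refine lintegral_congr fun x => ?_
    have hpre : Prod.mk x ⁻¹' {p : ℝ × ℝ | a ≤ p.1 ∧ p.1 ≤ p.2} = {t | a ≤ x ∧ x ≤ t} := rfl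
    rw [hpre]
    by_cases hax : a ≤ x
    · have hset : {t : ℝ | a ≤ x ∧ x ≤ t} = Set.Ici x := by
        ext t; simp [hax, Set.mem_Ici]
      rw [hset, hτA _ measurableSet_Ici]
      have hvol : volume (Set.Ioo a b ∩ Set.Ici x) = ENNReal.ofReal (b - x) := by
        rcases eq_or_lt_of_le hax with h | h
        · have : Set.Ioo a b ∩ Set.Ici x = Set.Ioo a b := by
            rw [Set.inter_eq_left]
            intro t ht
            exact le_of_lt (h ▸ ht.1)
          rw [this, Real.volume_Ioo, ← h]
        · have : Set.Ioo a b ∩ Set.Ici x = Set.Ico x b := by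
            ext t
            constructor
            · rintro ⟨⟨_, h2⟩, h3⟩; exact ⟨h3, h2⟩
            · rintro ⟨h3, h2⟩; exact ⟨⟨lt_of_lt_of_le h h3, h2⟩, h3⟩
          rw [this, Real.volume_Ico]
      rw [hvol]
      by_cases hxb : x ≤ b
      · rw [hg1def, Set.indicator_of_mem (Set.mem_Icc.mpr ⟨hax, hxb⟩),
          ENNReal.ofReal_div_of_pos hba, ENNReal.div_eq_inv_mul]
      · have h0 : ENNReal.ofReal (b - x) = 0 := ENNReal.ofReal_of_nonpos (by linarith)
        rw [h0, mul_zero, hg1def, Set.indicator_of_notMem (by simp [Set.mem_Icc, hxb]),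
          ENNReal.ofReal_zero]
    · have hset : {t : ℝ | a ≤ x ∧ x ≤ t} = ∅ := by
        ext t; simp [hax]
      rw [hset, measure_empty, hg1def,
        Set.indicator_of_notMem (by simp [Set.mem_Icc, hax]), ENNReal.ofReal_zero]
  -- second probability
  have key2 : μP {ω | T ω < X ω ∧ X ω ≤ b} = ∫⁻ x, ENNReal.ofReal (g2 x) ∂ν := by
    have hS2 : MeasurableSet {p : ℝ × ℝ | p.2 < p.1 ∧ p.1 ≤ b} :=
      (measurableSet_lt measurable_snd measurable_fst).inter
        (measurableSet_le measurable_fst measurable_const)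
    have h1 : μP {ω | T ω < X ω ∧ X ω ≤ b}
        = (ν.prod τ) {p : ℝ × ℝ | p.2 < p.1 ∧ p.1 ≤ b} := by
      rw [← hjoint, Measure.map_apply (hX.prodMk hT) hS2]
      rfl
    rw [h1, Measure.prod_apply hS2]
    refine lintegral_congr fun x => ?_
    have hpre : Prod.mk x ⁻¹' {p : ℝ × ℝ | p.2 < p.1 ∧ p.1 ≤ b} = {t | t < x ∧ x ≤ b} := rfl
    rw [hpre]
    by_cases hxb : x ≤ b
    · have hset : {t : ℝ | t < x ∧ x ≤ b} = Set.Iio x := by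
        ext t; simp [hxb, Set.mem_Iio]
      rw [hset, hτA _ measurableSet_Iio]
      have hvol : volume (Set.Ioo a b ∩ Set.Iio x) = ENNReal.ofReal (x - a) := by
        have : Set.Ioo a b ∩ Set.Iio x = Set.Ioo a x := by
          ext t
          constructor
          · rintro ⟨⟨h1, _⟩, h3⟩; exact ⟨h1, h3⟩
          · rintro ⟨h1, h3⟩; exact ⟨⟨h1, lt_of_lt_of_le h3 hxb⟩, h3⟩
        rw [this, Real.volume_Ioo]
      rw [hvol]
      by_cases hax : a ≤ x
      · rw [hg2def, Set.indicator_of_mem (Set.mem_Icc.mpr ⟨hax, hxb⟩),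
          ENNReal.ofReal_div_of_pos hba, ENNReal.div_eq_inv_mul]
      · have h0 : ENNReal.ofReal (x - a) = 0 := ENNReal.ofReal_of_nonpos (by linarith)
        rw [h0, mul_zero, hg2def, Set.indicator_of_notMem (by simp [Set.mem_Icc, hax]),
          ENNReal.ofReal_zero]
    · have hset : {t : ℝ | t < x ∧ x ≤ b} = ∅ := by
        ext t; simp [hxb]
      rw [hset, measure_empty, hg2def,
        Set.indicator_of_notMem (by simp [Set.mem_Icc, hxb]), ENNReal.ofReal_zero]
  -- integrability and nonnegativity
  have hg1meas : Measurable g1 :=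
    ((measurable_const.sub measurable_id).div_const _).indicator measurableSet_Icc
  have hg2meas : Measurable g2 :=
    ((measurable_id.sub measurable_const).div_const _).indicator measurableSet_Icc
  have hg1nn : ∀ x, 0 ≤ g1 x := fun x => Set.indicator_apply_nonneg fun hx =>
    div_nonneg (by linarith [(Set.mem_Icc.mp hx).2]) hba.le
  have hg2nn : ∀ x, 0 ≤ g2 x := fun x => Set.indicator_apply_nonneg fun hx =>
    div_nonneg (by linarith [(Set.mem_Icc.mp hx).1]) hba.le
  have hg1bd : ∀ x, ‖g1 x‖ ≤ 1 := by
    intro x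
    rw [Real.norm_eq_abs, abs_of_nonneg (hg1nn x)]
    by_cases hx : x ∈ Set.Icc a b
    · rw [hg1def, Set.indicator_of_mem hx]
      exact div_le_one_of_le₀ (by linarith [(Set.mem_Icc.mp hx).1]) hba.le
    · rw [hg1def, Set.indicator_of_notMem hx]; norm_num
  have hg2bd : ∀ x, ‖g2 x‖ ≤ 1 := by
    intro x
    rw [Real.norm_eq_abs, abs_of_nonneg (hg2nn x)]
    by_cases hx : x ∈ Set.Icc a b
    · rw [hg2def, Set.indicator_of_mem hx]
      exact div_le_one_of_le₀ (by linarith [(Set.mem_Icc.mp hx).2]) hba.le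
    · rw [hg2def, Set.indicator_of_notMem hx]; norm_num
  have hg1int : Integrable g1 ν :=
    (integrable_const 1).mono' hg1meas.aestronglyMeasurable (ae_of_all _ hg1bd)
  have hg2int : Integrable g2 ν :=
    (integrable_const 1).mono' hg2meas.aestronglyMeasurable (ae_of_all _ hg2bd)
  -- convert to real integrals
  have hto1 : (μP {ω | a ≤ X ω ∧ X ω ≤ T ω}).toReal = ∫ x, g1 x ∂ν := by
    rw [key1, ← ofReal_integral_eq_lintegral_ofReal hg1int (ae_of_all _ hg1nn),
      ENNReal.toReal_ofReal (integral_nonneg hg1nn)]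
  have hto2 : (μP {ω | T ω < X ω ∧ X ω ≤ b}).toReal = ∫ x, g2 x ∂ν := by
    rw [key2, ← ofReal_integral_eq_lintegral_ofReal hg2int (ae_of_all _ hg2nn),
      ENNReal.toReal_ofReal (integral_nonneg hg2nn)]
  rw [hto1, hto2, ← integral_const_mul, ← integral_const_mul,
    ← integral_add (hg1int.const_mul a) (hg2int.const_mul b)]
  -- rewrite RHS via the pushforward
  have hRHS : ∫ ω, (if a ≤ X ω ∧ X ω ≤ b then X ω else 0) ∂μP
      = ∫ x, (if a ≤ x ∧ x ≤ b then x else 0) ∂ν := by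
    rw [hν, integral_map hX.aemeasurable]
    exact (measurable_id.ite ((measurableSet_le measurable_const measurable_id).inter
      (measurableSet_le measurable_id measurable_const)) measurable_const).aestronglyMeasurable
  rw [hRHS]
  refine integral_congr_ae (ae_of_all _ fun x => ?_)
  by_cases hx : x ∈ Set.Icc a b
  · obtain ⟨h1, h2⟩ := Set.mem_Icc.mp hx
    show a * g1 x + b * g2 x = if a ≤ x ∧ x ≤ b then x else 0
    rw [if_pos (And.intro h1 h2), hg1def, hg2def, Set.indicator_of_mem hx,
      Set.indicator_of_mem hx]
    have hne : b - a ≠ 0 := ne_of_gt hba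
    field_simp
    ring
  · have hx' : ¬(a ≤ x ∧ x ≤ b) := by simpa [Set.mem_Icc] using hx
    show a * g1 x + b * g2 x = if a ≤ x ∧ x ≤ b then x else 0
    rw [if_neg hx', hg1def, hg2def, Set.indicator_of_notMem hx, Set.indicator_of_notMem hx]
    ring
end
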